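/- For all complex s with Re(s) > |Re(ν)|, the Mellin transform of the K-Bessel function satisfies ∫₀^∞ K_ν(x) x^{s-1} dx = 2^{s-2} Γ((s+ν)/2) Γ((s−ν)/2). -/

import Mathlib

open Complex MeasureTheory Set

/-- The modified Bessel function of the second kind, via its integral
representation `K_ν(x) = (1/2) ∫₀^∞ exp(-x(t+1/t)/2) t^{ν-1} dt`. -/
noncomputable def besselK (ν : ℂ) (x : ℝ) : ℂ :=
  (1/2) * ∫ t in Set.Ioi (0:ℝ),
    Complex.exp (-(x:ℂ) * ((t:ℂ) + 1/(t:ℂ)) / 2) * (t:ℂ)^(ν-1)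

open Real Filter


lemma contOn_cpow (c : ℂ) : ContinuousOn (fun x : ℝ => (x:ℂ) ^ c) (Ioi 0) :=
  fun x hx => (continuousAt_ofReal_cpow_const x c (Or.inr (ne_of_gt hx))).continuousWithinAt

lemma int_rpow_exp {c r : ℝ} (hc : 0 < c) (hr : 0 < r) :
    IntegrableOn (fun x : ℝ => x ^ (c - 1) * Real.exp (-(r * x))) (Ioi 0) := by
  have := integrableOn_rpow_mul_exp_neg_mul_rpow (p := 1) (s := c - 1) (b := r)
    (by linarith) zero_lt_one hr
  simpa [Real.rpow_one, neg_mul] using this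

lemma intOn_cpow_exp {c : ℂ} (hc : 0 < c.re) {r : ℝ} (hr : 0 < r) :
    IntegrableOn (fun x : ℝ => (x:ℂ) ^ (c - 1) * Complex.exp (-((r:ℂ) * (x:ℂ)))) (Ioi 0) := by
  apply Integrable.mono' (int_rpow_exp hc hr)
  · refine ContinuousOn.aestronglyMeasurable ?_ measurableSet_Ioi
    exact (contOn_cpow (c-1)).mul (Continuous.continuousOn (by continuity))
  · filter_upwards [ae_restrict_mem measurableSet_Ioi] with x hx
    rw [norm_mul]
    have h1 : ‖(x:ℂ) ^ (c-1)‖ = x ^ (c.re - 1) := by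
      rw [Complex.norm_cpow_eq_rpow_re_of_pos hx]
      simp [Complex.sub_re]
    have h2 : ‖Complex.exp (-((r:ℂ) * (x:ℂ)))‖ = Real.exp (-(r * x)) := by
      rw [Complex.norm_exp]
      congr 1
      simp
    rw [h1, h2]

lemma intOn_beta_gen {α β k : ℝ} (hα : 0 < α) (hk : 0 < k) (hαβ : α < k * β) :
    IntegrableOn (fun t : ℝ => t ^ (α - 1) * (1 + t ^ k) ^ (-β)) (Ioi 0) := by
  have hβ : 0 < β := by nlinarith
  have hmeas : ∀ s : Set ℝ, MeasurableSet s → AEStronglyMeasurable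
      (fun t : ℝ => t ^ (α - 1) * (1 + t ^ k) ^ (-β)) (volume.restrict s) := by
    intro s hs
    apply Measurable.aestronglyMeasurable
    fun_prop
  rw [← Ioc_union_Ioi_eq_Ioi (zero_le_one : (0:ℝ) ≤ 1)]
  apply IntegrableOn.union
  · apply Integrable.mono' (g := fun t : ℝ => t ^ (α - 1))
    · exact (intervalIntegral.intervalIntegrable_rpow' (by linarith)).1
    · exact hmeas _ measurableSet_Ioc
    · filter_upwards [ae_restrict_mem measurableSet_Ioc] with t ht
      have ht0 : 0 < t := ht.1
      have h1 : (1 + t ^ k) ^ (-β) ≤ 1 :=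
        Real.rpow_le_one_of_one_le_of_nonpos
          (le_add_of_nonneg_right (Real.rpow_nonneg ht0.le _)) (by linarith)
      rw [Real.norm_eq_abs, _root_.abs_of_nonneg (by positivity)]
      calc t ^ (α - 1) * (1 + t ^ k) ^ (-β) ≤ t ^ (α - 1) * 1 := by
            apply mul_le_mul_of_nonneg_left h1 (by positivity)
        _ = t ^ (α - 1) := mul_one _
  · apply Integrable.mono' (g := fun t : ℝ => t ^ (α - 1 - k * β))
    · exact integrableOn_Ioi_rpow_of_lt (by linarith) one_pos
    · exact hmeas _ measurableSet_Ioi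
    · filter_upwards [ae_restrict_mem measurableSet_Ioi] with t ht
      have ht0 : (0:ℝ) < t := lt_trans one_pos ht
      rw [Real.norm_eq_abs, _root_.abs_of_nonneg (by positivity)]
      have h1 : (1 + t ^ k) ^ (-β) ≤ (t ^ k) ^ (-β) :=
        Real.rpow_le_rpow_of_nonpos (by positivity)
          (le_add_of_nonneg_left zero_le_one) (by linarith)
      have h2 : (t ^ k) ^ (-β) = t ^ (k * (-β)) := by
        rw [Real.rpow_mul ht0.le]
      calc t ^ (α - 1) * (1 + t ^ k) ^ (-β) ≤ t ^ (α - 1) * (t ^ k) ^ (-β) :=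
            mul_le_mul_of_nonneg_left h1 (by positivity)
        _ = t ^ (α - 1 - k * β) := by
            rw [h2, ← Real.rpow_add ht0]; ring_nf

lemma intOn_beta1 {α β : ℝ} (hα : 0 < α) (hαβ : α < β) :
    IntegrableOn (fun u : ℝ => u ^ (α - 1) * (1 + u) ^ (-β)) (Ioi 0) := by
  have := intOn_beta_gen hα one_pos (by linarith : α < 1 * β)
  apply this.congr_fun ?_ measurableSet_Ioi
  intro t ht
  simp [Real.rpow_one]

lemma intOn_beta2 {α β : ℝ} (hα : 0 < α) (hαβ : α < 2 * β) :
    IntegrableOn (fun t : ℝ => t ^ (α - 1) * (1 + t ^ 2) ^ (-β)) (Ioi 0) := by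
  have := intOn_beta_gen hα two_pos hαβ
  apply this.congr_fun ?_ measurableSet_Ioi
  intro t ht
  norm_num [show (2:ℝ) = ((2:ℕ):ℝ) by norm_num, Real.rpow_natCast]

lemma ofReal_neg_cpow {w : ℝ} (hw : 0 < w) (z : ℂ) :
    ((w:ℝ):ℂ) ^ (-z) = (1 / (w:ℂ)) ^ z := by
  rw [Complex.cpow_neg, one_div, Complex.inv_cpow]
  rw [Complex.arg_ofReal_of_nonneg hw.le]
  exact Real.pi_ne_zero.symm

lemma real_inv_rpow_neg {w : ℝ} (hw : 0 < w) (p : ℝ) :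
    (1 / w) ^ p = w ^ (-p) := by
  rw [one_div, ← Real.rpow_neg_one, ← Real.rpow_mul hw.le]
  ring_nf


lemma betaIoi {a b : ℂ} (ha : 0 < a.re) (hb : 0 < b.re) :
    ∫ u in Ioi (0:ℝ), (u:ℂ) ^ (a - 1) * ((1 + u : ℝ):ℂ) ^ (-(a+b))
      = Complex.Gamma a * Complex.Gamma b / Complex.Gamma (a+b) := by
  have hc : 0 < (a+b).re := by rw [Complex.add_re]; linarith
  have hab' : a.re < (a+b).re := by rw [Complex.add_re]; linarith
  rw [eq_div_iff (Complex.Gamma_ne_zero_of_re_pos hc)]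
  have key : ∀ u : ℝ, 0 < u → ((1+u:ℝ):ℂ)^(-(a+b)) * Complex.Gamma (a+b)
      = ∫ y in Ioi (0:ℝ), (y:ℂ)^((a+b)-1) * Complex.exp (-(((1+u:ℝ):ℂ) * (y:ℂ))) := by
    intro u hu
    rw [Complex.integral_cpow_mul_exp_neg_mul_Ioi hc (by linarith : (0:ℝ) < 1 + u)]
    congr 1
    exact ofReal_neg_cpow (by linarith) (a+b)
  have hFmeas : AEStronglyMeasurable
      (Function.uncurry (fun u y : ℝ =>
        (u:ℂ)^(a-1) * ((y:ℂ)^((a+b)-1) * Complex.exp (-(((1+u:ℝ):ℂ) * (y:ℂ))))))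
      ((volume.restrict (Ioi (0:ℝ))).prod (volume.restrict (Ioi (0:ℝ)))) := by
    apply Measurable.aestronglyMeasurable
    apply Measurable.mul
    · fun_prop
    · fun_prop
  have hF : Integrable
      (Function.uncurry (fun u y : ℝ =>
        (u:ℂ)^(a-1) * ((y:ℂ)^((a+b)-1) * Complex.exp (-(((1+u:ℝ):ℂ) * (y:ℂ))))))
      ((volume.restrict (Ioi (0:ℝ))).prod (volume.restrict (Ioi (0:ℝ)))) := by
    refine (MeasureTheory.integrable_prod_iff hFmeas).mpr ⟨?_, ?_⟩
    · filter_upwards [ae_restrict_mem measurableSet_Ioi] with u hu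
      simp only [Function.uncurry_apply_pair]
      exact (intOn_cpow_exp hc (by have : (0:ℝ) < u := hu; linarith : (0:ℝ) < 1+u)).const_mul _
    · apply MeasureTheory.Integrable.congr
        ((intOn_beta1 ha hab').mul_const (Real.Gamma (a+b).re))
      filter_upwards [ae_restrict_mem measurableSet_Ioi] with u hu
      have hu0 : (0:ℝ) < u := hu
      have hu1 : (0:ℝ) < 1 + u := by linarith
      simp only [Function.uncurry_apply_pair]
      have hnorm : ∀ y : ℝ, y ∈ Ioi (0:ℝ) →
          ‖(u:ℂ)^(a-1) * ((y:ℂ)^((a+b)-1) * Complex.exp (-(((1+u:ℝ):ℂ) * (y:ℂ))))‖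
          = u ^ (a.re - 1) * (y ^ ((a+b).re - 1) * Real.exp (-((1+u) * y))) := by
        intro y hy
        rw [norm_mul, norm_mul]
        rw [show ‖(u:ℂ)^(a-1)‖ = u ^ (a.re - 1) by
          rw [Complex.norm_cpow_eq_rpow_re_of_pos hu0]
          simp [Complex.sub_re]]
        rw [show ‖(y:ℂ)^((a+b)-1)‖ = y ^ ((a+b).re - 1) by
          rw [Complex.norm_cpow_eq_rpow_re_of_pos hy]
          simp [Complex.sub_re]]
        rw [show ‖Complex.exp (-(((1+u:ℝ):ℂ) * (y:ℂ)))‖ = Real.exp (-((1+u) * y)) by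
          rw [Complex.norm_exp]
          congr 1
          simp]
      rw [MeasureTheory.setIntegral_congr_fun measurableSet_Ioi hnorm]
      rw [MeasureTheory.integral_const_mul,
        Real.integral_rpow_mul_exp_neg_mul_Ioi hc hu1]
      rw [real_inv_rpow_neg hu1]
      ring
  calc (∫ u in Ioi (0:ℝ), (u:ℂ)^(a-1) * ((1+u:ℝ):ℂ)^(-(a+b))) * Complex.Gamma (a+b)
      = ∫ u in Ioi (0:ℝ), (u:ℂ)^(a-1) * (((1+u:ℝ):ℂ)^(-(a+b)) * Complex.Gamma (a+b)) := by
        rw [← integral_mul_const]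
        congr 1; funext u; ring
    _ = ∫ u in Ioi (0:ℝ), ∫ y in Ioi (0:ℝ),
          (u:ℂ)^(a-1) * ((y:ℂ)^((a+b)-1) * Complex.exp (-(((1+u:ℝ):ℂ) * (y:ℂ)))) := by
        apply MeasureTheory.setIntegral_congr_fun measurableSet_Ioi
        intro u hu
        dsimp only
        rw [key u hu, ← MeasureTheory.integral_const_mul]
    _ = ∫ y in Ioi (0:ℝ), ∫ u in Ioi (0:ℝ),
          (u:ℂ)^(a-1) * ((y:ℂ)^((a+b)-1) * Complex.exp (-(((1+u:ℝ):ℂ) * (y:ℂ)))) :=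
        MeasureTheory.integral_integral_swap hF
    _ = ∫ y in Ioi (0:ℝ), Complex.Gamma a * ((y:ℂ)^(b-1) * Complex.exp (-(((1:ℝ):ℂ) * (y:ℂ)))) := by
        apply MeasureTheory.setIntegral_congr_fun measurableSet_Ioi
        intro y hy
        dsimp only
        have hy0 : (0:ℝ) < y := hy
        have hyne : (y:ℂ) ≠ 0 := by exact_mod_cast hy0.ne'
        have hsplit : ∀ u : ℝ, u ∈ Ioi (0:ℝ) →
            (u:ℂ)^(a-1) * ((y:ℂ)^((a+b)-1) * Complex.exp (-(((1+u:ℝ):ℂ) * (y:ℂ))))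
            = ((y:ℂ)^((a+b)-1) * Complex.exp (-((y:ℝ):ℂ)))
                * ((u:ℂ)^(a-1) * Complex.exp (-(((y:ℝ):ℂ) * (u:ℂ)))) := by
          intro u hu
          have harg : (-(((1+u:ℝ):ℂ) * (y:ℂ))) = (-((y:ℝ):ℂ)) + (-(((y:ℝ):ℂ) * (u:ℂ))) := by
            push_cast; ring
          rw [harg, Complex.exp_add]
          ring
        rw [MeasureTheory.setIntegral_congr_fun measurableSet_Ioi hsplit,
          MeasureTheory.integral_const_mul,
          Complex.integral_cpow_mul_exp_neg_mul_Ioi ha hy0]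
        rw [← ofReal_neg_cpow hy0 a]
        have hmul : (y:ℂ)^((a+b)-1) * ((y:ℝ):ℂ)^(-a) = (y:ℂ)^(b-1) := by
          rw [← Complex.cpow_add _ _ hyne]
          congr 1; ring
        have hexp : Complex.exp (-((y:ℝ):ℂ)) = Complex.exp (-(((1:ℝ):ℂ) * (y:ℂ))) := by
          norm_num
        calc (y:ℂ)^((a+b)-1) * Complex.exp (-((y:ℝ):ℂ)) * (((y:ℝ):ℂ)^(-a) * Complex.Gamma a)
            = Complex.Gamma a * (((y:ℂ)^((a+b)-1) * ((y:ℝ):ℂ)^(-a)) * Complex.exp (-((y:ℝ):ℂ))) := by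
              ring
          _ = Complex.Gamma a * ((y:ℂ)^(b-1) * Complex.exp (-(((1:ℝ):ℂ) * (y:ℂ)))) := by
              rw [hmul, hexp]
    _ = Complex.Gamma a * Complex.Gamma b := by
        rw [MeasureTheory.integral_const_mul,
          Complex.integral_cpow_mul_exp_neg_mul_Ioi hb one_pos]
        norm_num

/-- For `Re(s) > |Re(ν)|`, the Mellin transform of `K_ν` is
`∫₀^∞ K_ν(x) x^{s-1} dx = 2^{s-2} Γ((s+ν)/2) Γ((s-ν)/2)`. -/
theorem mellin_besselK (ν s : ℂ) (hs : |ν.re| < s.re) :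
    ∫ x in Set.Ioi (0:ℝ), besselK ν x * (x:ℂ)^(s-1)
      = (2:ℂ)^(s-2) * Complex.Gamma ((s+ν)/2) * Complex.Gamma ((s-ν)/2) := by
  obtain ⟨hν2, hν1⟩ := abs_lt.mp hs
  have hq : 0 < s.re := lt_of_le_of_lt (abs_nonneg _) hs
  have hhalf : ∀ z : ℂ, (z/2).re = z.re/2 := by
    intro z
    rw [show (2:ℂ) = ((2:ℝ):ℂ) by norm_num, Complex.div_ofReal_re]
  have ha : 0 < ((s+ν)/2).re := by rw [hhalf, Complex.add_re]; linarith
  have hb : 0 < ((s-ν)/2).re := by rw [hhalf, Complex.sub_re]; linarith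
  set r : ℝ → ℝ := fun t => (t + 1/t)/2 with hr_def
  have hrpos : ∀ t : ℝ, t ∈ Ioi (0:ℝ) → 0 < r t := by
    intro t ht
    have ht0 : (0:ℝ) < t := ht
    have h1t : (0:ℝ) < 1/t := by positivity
    simp only [hr_def]
    exact div_pos (by linarith) two_pos
  have hrval : ∀ t : ℝ, t ∈ Ioi (0:ℝ) → 1 / (r t) = 2*t/(1+t^2) := by
    intro t ht
    have ht0 : (0:ℝ) < t := ht
    simp only [hr_def]
    rw [div_eq_div_iff (by positivity) (by positivity)]
    field_simp
    ring
  have hcast : ∀ t : ℝ, ((r t : ℝ):ℂ) = ((t:ℂ) + 1/(t:ℂ))/2 := by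
    intro t
    simp only [hr_def]
    push_cast
    ring
  set F : ℝ → ℝ → ℂ := fun x t =>
    (t:ℂ)^(ν-1) * ((x:ℂ)^(s-1) * Complex.exp (-(((r t : ℝ):ℂ) * (x:ℂ)))) with hF_def
  have hbes : ∀ x : ℝ, besselK ν x = (1/2:ℂ) * ∫ t in Ioi (0:ℝ),
      Complex.exp (-(x:ℂ) * ((t:ℂ) + 1/(t:ℂ)) / 2) * (t:ℂ)^(ν-1) := fun _ => rfl
  have h0 : ∀ x : ℝ, besselK ν x * (x:ℂ)^(s-1) = (1/2:ℂ) * ∫ t in Ioi (0:ℝ), F x t := by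
    intro x
    rw [hbes x, mul_assoc, ← MeasureTheory.integral_mul_const]
    congr 1
    refine MeasureTheory.integral_congr_ae (Filter.Eventually.of_forall fun t => ?_)
    simp only [hF_def]
    rw [show -(x:ℂ) * ((t:ℂ) + 1/(t:ℂ)) / 2 = -(((r t:ℝ):ℂ) * (x:ℂ)) from by
      rw [hcast t]; ring]
    ring
  -- measurability
  have hFmeas : AEStronglyMeasurable (Function.uncurry F)
      ((volume.restrict (Ioi (0:ℝ))).prod (volume.restrict (Ioi (0:ℝ)))) := by
    apply Measurable.aestronglyMeasurable
    simp only [hF_def, hr_def]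
    apply Measurable.mul
    · fun_prop
    · fun_prop
  -- norm identity
  have hFnorm : ∀ x t : ℝ, 0 < x → 0 < t →
      ‖F x t‖ = t ^ (ν.re - 1) * (x ^ (s.re - 1) * Real.exp (-(r t * x))) := by
    intro x t hx ht
    simp only [hF_def]
    rw [norm_mul, norm_mul]
    rw [show ‖(t:ℂ)^(ν-1)‖ = t ^ (ν.re - 1) by
      rw [Complex.norm_cpow_eq_rpow_re_of_pos ht]
      simp [Complex.sub_re]]
    rw [show ‖(x:ℂ)^(s-1)‖ = x ^ (s.re - 1) by
      rw [Complex.norm_cpow_eq_rpow_re_of_pos hx]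
      simp [Complex.sub_re]]
    rw [show ‖Complex.exp (-(((r t:ℝ):ℂ) * (x:ℂ)))‖ = Real.exp (-(r t * x)) by
      rw [Complex.norm_exp]
      congr 1
      simp]
  -- integrability for Fubini
  have hα : 0 < ν.re + s.re := by linarith
  have hF : Integrable (Function.uncurry F)
      ((volume.restrict (Ioi (0:ℝ))).prod (volume.restrict (Ioi (0:ℝ)))) := by
    refine (MeasureTheory.integrable_prod_iff' hFmeas).mpr ⟨?_, ?_⟩
    · filter_upwards [ae_restrict_mem measurableSet_Ioi] with t ht
      simp only [Function.uncurry_apply_pair, hF_def]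
      exact (intOn_cpow_exp hq (hrpos t ht)).const_mul _
    · apply MeasureTheory.Integrable.congr
        (((intOn_beta2 hα (by linarith : ν.re + s.re < 2 * s.re)).const_mul
          ((2:ℝ) ^ s.re * Real.Gamma s.re)))
      filter_upwards [ae_restrict_mem measurableSet_Ioi] with t ht
      have ht0 : (0:ℝ) < t := ht
      have hw : (0:ℝ) < 1 + t^2 := by positivity
      simp only [Function.uncurry_apply_pair]
      have hnorm : ∀ x : ℝ, x ∈ Ioi (0:ℝ) →
          ‖F x t‖ = t ^ (ν.re - 1) * (x ^ (s.re - 1) * Real.exp (-(r t * x))) :=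
        fun x hx => hFnorm x t hx ht0
      rw [MeasureTheory.setIntegral_congr_fun measurableSet_Ioi hnorm,
        MeasureTheory.integral_const_mul,
        Real.integral_rpow_mul_exp_neg_mul_Ioi hq (hrpos t ht),
        hrval t ht]
      -- goal: const * (t^(ν.re+s.re-1) * (1+t^2)^(-s.re)) = t^(ν.re-1) * ((2t/(1+t²))^s.re * Γ)
      rw [show (2*t/(1+t^2)) = (2*t) * (1+t^2)⁻¹ from div_eq_mul_inv _ _]
      rw [Real.mul_rpow (by positivity) (by positivity),
        Real.mul_rpow (by norm_num) ht0.le,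
        ← Real.rpow_neg_one (1+t^2), ← Real.rpow_mul hw.le]
      rw [show (-1 : ℝ) * s.re = -s.re by ring]
      rw [show ν.re + s.re - 1 = s.re + (ν.re - 1) by ring,
        Real.rpow_add ht0]
      ring
  calc ∫ x in Ioi (0:ℝ), besselK ν x * (x:ℂ)^(s-1)
      = ∫ x in Ioi (0:ℝ), (1/2:ℂ) * ∫ t in Ioi (0:ℝ), F x t := by
        refine MeasureTheory.integral_congr_ae (Filter.Eventually.of_forall fun x => h0 x)
    _ = (1/2:ℂ) * ∫ x in Ioi (0:ℝ), ∫ t in Ioi (0:ℝ), F x t :=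
        MeasureTheory.integral_const_mul _ _
    _ = (1/2:ℂ) * ∫ t in Ioi (0:ℝ), ∫ x in Ioi (0:ℝ), F x t := by
        rw [MeasureTheory.integral_integral_swap hF]
    _ = (1/2:ℂ) * ∫ t in Ioi (0:ℝ),
          (Complex.Gamma s * (2:ℂ)^s) * ((t:ℂ)^(s+ν-1) * ((1+t^2:ℝ):ℂ)^(-s)) := by
        congr 1
        apply MeasureTheory.setIntegral_congr_fun measurableSet_Ioi
        intro t ht
        dsimp only
        have ht0 : (0:ℝ) < t := ht
        have htne : (t:ℂ) ≠ 0 := by exact_mod_cast ht0.ne'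
        have hw : (0:ℝ) < 1 + t^2 := by positivity
        simp only [hF_def]
        rw [MeasureTheory.integral_const_mul,
          Complex.integral_cpow_mul_exp_neg_mul_Ioi hq (hrpos t ht)]
        have e1 : (1/(((r t):ℝ):ℂ)) = ((2*t/(1+t^2):ℝ):ℂ) := by
          rw [← Complex.ofReal_one, ← Complex.ofReal_div, hrval t ht]
        rw [e1]
        have e2 : ((2*t/(1+t^2):ℝ):ℂ)^s = (2:ℂ)^s * ((t:ℂ)^s * ((1+t^2:ℝ):ℂ)^(-s)) := by
          rw [show (2*t/(1+t^2):ℝ) = (2*t) * (1+t^2)⁻¹ from div_eq_mul_inv _ _]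
          rw [Complex.ofReal_mul]
          rw [mul_cpow_ofReal_nonneg (by positivity) (by positivity)]
          rw [Complex.ofReal_mul, mul_cpow_ofReal_nonneg (by norm_num) ht0.le]
          rw [Complex.ofReal_inv]
          rw [inv_cpow _ _ (by
            rw [Complex.arg_ofReal_of_nonneg hw.le]; exact Real.pi_ne_zero.symm)]
          rw [← Complex.cpow_neg, Complex.ofReal_ofNat, mul_assoc]
        rw [e2]
        have e3 : (t:ℂ)^s * (t:ℂ)^(ν-1) = (t:ℂ)^(s+ν-1) := by
          rw [← Complex.cpow_add _ _ htne]
          congr 1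
          ring
        rw [← e3]
        ring
    _ = (1/2:ℂ) * ((Complex.Gamma s * (2:ℂ)^s) *
          ∫ t in Ioi (0:ℝ), (t:ℂ)^(s+ν-1) * ((1+t^2:ℝ):ℂ)^(-s)) := by
        rw [MeasureTheory.integral_const_mul]
    _ = (1/2:ℂ) * ((Complex.Gamma s * (2:ℂ)^s) * ((1/2:ℂ) *
          ∫ u in Ioi (0:ℝ), (u:ℂ)^((s+ν)/2-1) * ((1+u:ℝ):ℂ)^(-s))) := by
        congr 2
        -- J = (1/2) * ∫ u g u
        have hcomp := integral_comp_rpow_Ioi_of_pos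
          (g := fun u : ℝ => (u:ℂ)^((s+ν)/2-1) * ((1+u:ℝ):ℂ)^(-s)) (p := 2) two_pos
        have hpt : ∀ x : ℝ, x ∈ Ioi (0:ℝ) →
            ((2:ℝ) * x ^ ((2:ℝ) - 1)) • (((x ^ (2:ℝ) : ℝ):ℂ)^((s+ν)/2-1)
                * ((1 + x ^ (2:ℝ) : ℝ):ℂ)^(-s))
            = (2:ℂ) * ((x:ℂ)^(s+ν-1) * ((1+x^2:ℝ):ℂ)^(-s)) := by
          intro x hx
          have hx0 : (0:ℝ) < x := hx
          have hxne : (x:ℂ) ≠ 0 := by exact_mod_cast hx0.ne'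
          have hsq : x ^ (2:ℝ) = x ^ 2 := by
            rw [show (2:ℝ) = ((2:ℕ):ℝ) by norm_num, Real.rpow_natCast]
          rw [hsq]
          have him : (Complex.log (x:ℂ) * ((2:ℕ):ℂ)).im = 0 := by
            rw [← Complex.ofReal_log hx0.le]
            simp
          have hx2 : ((x^2:ℝ):ℂ)^((s+ν)/2-1) = (x:ℂ)^(s+ν-2) := by
            rw [show ((x^2:ℝ):ℂ) = (x:ℂ)^(2:ℕ) by push_cast; ring]
            rw [← Complex.cpow_natCast (x:ℂ) 2]
            rw [← Complex.cpow_mul _ (by rw [him]; exact neg_lt_zero.mpr Real.pi_pos)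
              (by rw [him]; exact Real.pi_pos.le)]
            congr 1
            push_cast
            ring
          rw [hx2]
          rw [show ((2:ℝ) - 1 : ℝ) = 1 by norm_num, Real.rpow_one]
          rw [Complex.real_smul]
          push_cast
          have e4 : (x:ℂ) * (x:ℂ)^(s+ν-2) = (x:ℂ)^(s+ν-1) := by
            nth_rewrite 1 [← Complex.cpow_one (x:ℂ)]
            rw [← Complex.cpow_add _ _ hxne]
            congr 1
            ring
          rw [← e4]
          ring
        rw [MeasureTheory.setIntegral_congr_fun measurableSet_Ioi hpt,
          MeasureTheory.integral_const_mul] at hcomp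
        rw [← hcomp]
        ring
    _ = (2:ℂ)^(s-2) * Complex.Gamma ((s+ν)/2) * Complex.Gamma ((s-ν)/2) := by
        have hbeta := betaIoi ha hb
        rw [show (s+ν)/2 + (s-ν)/2 = s by ring] at hbeta
        rw [hbeta]
        have hΓs : Complex.Gamma s ≠ 0 := Complex.Gamma_ne_zero_of_re_pos hq
        have h4 : (2:ℂ)^(2:ℂ) = 4 := by
          rw [show (2:ℂ) = ((2:ℕ):ℂ) by norm_num]
          rw [Complex.cpow_natCast]
          norm_num
        have h2s : (2:ℂ)^s = (2:ℂ)^(s-2) * 4 := by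
          rw [show s = (s-2) + 2 by ring, Complex.cpow_add _ _ (two_ne_zero), h4]
          ring_nf
        rw [h2s]
        field_simp
        ring
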